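/- For every k ∈ ℕ and every (w₁,w₂,w₋₁,w₋₂) with w₁+w₂ ≡ w₋₁+w₋₂ (mod 2π), |cos((2k+1)w₁)+cos((2k+1)w₂)−cos((2k+1)w₋₁)−cos((2k+1)w₋₂)| ≤ (2k+1)³ |cos w₁ + cos w₂ − cos w₋₁ − cos w₋₂|. -/
import Mathlib

open Real

lemma abs_sin_nat_mul (n : ℕ) (x : ℝ) : |Real.sin (n * x)| ≤ n * |Real.sin x| := by
  induction n with
  | zero => simp
  | succ n ih =>
    have e : ((n + 1 : ℕ) : ℝ) * x = n * x + x := by push_cast; ring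
    rw [e, Real.sin_add]
    calc |Real.sin (n * x) * Real.cos x + Real.cos (n * x) * Real.sin x|
        ≤ |Real.sin (n * x) * Real.cos x| + |Real.cos (n * x) * Real.sin x| := abs_add_le _ _
      _ ≤ |Real.sin (n * x)| * 1 + 1 * |Real.sin x| := by
          rw [abs_mul, abs_mul]
          gcongr <;> exact Real.abs_cos_le_one _
      _ ≤ n * |Real.sin x| + 1 * |Real.sin x| := by
          rw [mul_one]; gcongr; try exact ih
      _ = (n + 1 : ℕ) * |Real.sin x| := by push_cast; ring

lemma abs_cos_odd_mul (k : ℕ) (x : ℝ) :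
    |Real.cos ((2 * k + 1) * x)| ≤ (2 * k + 1) * |Real.cos x| := by
  induction k with
  | zero => simp
  | succ k ih =>
    have e : (2 * ((k + 1 : ℕ) : ℝ) + 1) * x = (2 * (k : ℝ) + 3) * x := by push_cast; ring
    rw [e]
    have key : Real.cos ((2 * (k : ℝ) + 3) * x)
        = 2 * Real.cos ((2 * (k : ℝ) + 2) * x) * Real.cos x - Real.cos ((2 * (k : ℝ) + 1) * x) := by
      have h := Real.cos_add_cos ((2 * (k : ℝ) + 3) * x) ((2 * (k : ℝ) + 1) * x)
      have e1 : ((2 * (k : ℝ) + 3) * x + (2 * (k : ℝ) + 1) * x) / 2 = (2 * (k : ℝ) + 2) * x := by ring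
      have e2 : ((2 * (k : ℝ) + 3) * x - (2 * (k : ℝ) + 1) * x) / 2 = x := by ring
      rw [e1, e2] at h
      linarith
    rw [key]
    calc |2 * Real.cos ((2 * (k : ℝ) + 2) * x) * Real.cos x - Real.cos ((2 * (k : ℝ) + 1) * x)|
        ≤ |2 * Real.cos ((2 * (k : ℝ) + 2) * x) * Real.cos x| + |Real.cos ((2 * (k : ℝ) + 1) * x)| :=
          abs_sub _ _
      _ ≤ 2 * 1 * |Real.cos x| + (2 * (k : ℝ) + 1) * |Real.cos x| := by
          gcongr
          all_goals try exact ih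
          all_goals rw [abs_mul, abs_mul, abs_two]
          all_goals have := Real.abs_cos_le_one ((2 * (k : ℝ) + 2) * x)
          all_goals nlinarith [abs_nonneg (Real.cos x)]
      _ = (2 * ((k + 1 : ℕ) : ℝ) + 1) * |Real.cos x| := by push_cast; try ring

theorem D2_cos_k_le (k : ℕ) (w₁ w₂ wm₁ wm₂ : ℝ)
    (hres : ∃ j : ℤ, w₁ + w₂ - wm₁ - wm₂ = 2 * Real.pi * j) :
    |Real.cos ((2 * k + 1) * w₁) + Real.cos ((2 * k + 1) * w₂)
        - Real.cos ((2 * k + 1) * wm₁) - Real.cos ((2 * k + 1) * wm₂)|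
      ≤ (2 * k + 1) ^ 3 * |Real.cos w₁ + Real.cos w₂ - Real.cos wm₁ - Real.cos wm₂| := by
  obtain ⟨j, hj⟩ := hres
  set m : ℝ := 2 * k + 1 with hm
  set s : ℝ := (w₁ + w₂) / 2 with hs
  set d : ℝ := (w₁ - w₂) / 2 with hd
  set s' : ℝ := (wm₁ + wm₂) / 2 with hs'
  set d' : ℝ := (wm₁ - wm₂) / 2 with hd'
  set u : ℝ := (d + d') / 2 with hu
  set v : ℝ := (d - d') / 2 with hv
  have hmnat : ((2 * k + 1 : ℕ) : ℝ) = m := by rw [hm]; push_cast; ring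
  have E : ∀ t : ℝ, Real.cos (t * w₁) + Real.cos (t * w₂)
      = 2 * Real.cos (t * s) * Real.cos (t * d) := by
    intro t
    have h := Real.cos_add_cos (t * w₁) (t * w₂)
    have e1 : (t * w₁ + t * w₂) / 2 = t * s := by rw [hs]; ring
    have e2 : (t * w₁ - t * w₂) / 2 = t * d := by rw [hd]; ring
    rwa [e1, e2] at h
  have E' : ∀ t : ℝ, Real.cos (t * wm₁) + Real.cos (t * wm₂)
      = 2 * Real.cos (t * s') * Real.cos (t * d') := by
    intro t
    have h := Real.cos_add_cos (t * wm₁) (t * wm₂)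
    have e1 : (t * wm₁ + t * wm₂) / 2 = t * s' := by rw [hs']; ring
    have e2 : (t * wm₁ - t * wm₂) / 2 = t * d' := by rw [hd']; ring
    rwa [e1, e2] at h
  have hcos_m : |Real.cos (m * s)| ≤ m * |Real.cos s| := by
    have h := abs_cos_odd_mul k s
    rw [hm]; exact h
  rcases Int.even_or_odd j with ⟨q, hq⟩ | ⟨q, hq⟩
  · -- even case
    have hsr : s' = s - Real.pi * (2 * q) := by
      rw [hq] at hj; rw [hs, hs']; push_cast at hj ⊢; linarith
    have hseq : ∀ t : ℤ, Real.cos ((t : ℝ) * s') = Real.cos ((t : ℝ) * s) := by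
      intro t
      have e : (t : ℝ) * s' = (t : ℝ) * s - ((t * q : ℤ) : ℝ) * (2 * Real.pi) := by
        rw [hsr]; push_cast; ring
      rw [e, Real.cos_sub_int_mul_two_pi]
    have hc1 : Real.cos (m * s') = Real.cos (m * s) := by
      have h := hseq (2 * k + 1)
      rw [show (((2 * k + 1 : ℤ)) : ℝ) = m by rw [hm]; push_cast; ring] at h
      exact h
    have hc0 : Real.cos s' = Real.cos s := by
      have h := hseq 1; simpa using h
    have D : ∀ t : ℝ, Real.cos (t * d) - Real.cos (t * d')
        = -2 * Real.sin (t * u) * Real.sin (t * v) := by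
      intro t
      have h := Real.cos_sub_cos (t * d) (t * d')
      have e1 : (t * d + t * d') / 2 = t * u := by rw [hu]; ring
      have e2 : (t * d - t * d') / 2 = t * v := by rw [hv]; ring
      rwa [e1, e2] at h
    have lhs_eq : Real.cos (m * w₁) + Real.cos (m * w₂) - Real.cos (m * wm₁) - Real.cos (m * wm₂)
        = -4 * Real.cos (m * s) * Real.sin (m * u) * Real.sin (m * v) := by
      have h1 := E m; have h2 := E' m; have h3 := D m
      rw [hc1] at h2
      calc Real.cos (m * w₁) + Real.cos (m * w₂) - Real.cos (m * wm₁) - Real.cos (m * wm₂)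
          = 2 * Real.cos (m * s) * Real.cos (m * d) - 2 * Real.cos (m * s) * Real.cos (m * d') := by
            linarith
        _ = 2 * Real.cos (m * s) * (Real.cos (m * d) - Real.cos (m * d')) := by ring
        _ = 2 * Real.cos (m * s) * (-2 * Real.sin (m * u) * Real.sin (m * v)) := by rw [h3]
        _ = -4 * Real.cos (m * s) * Real.sin (m * u) * Real.sin (m * v) := by ring
    have rhs_eq : Real.cos w₁ + Real.cos w₂ - Real.cos wm₁ - Real.cos wm₂
        = -4 * Real.cos s * Real.sin u * Real.sin v := by
      have h1 := E 1; have h2 := E' 1; have h3 := D 1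
      simp only [one_mul] at h1 h2 h3
      rw [hc0] at h2
      calc Real.cos w₁ + Real.cos w₂ - Real.cos wm₁ - Real.cos wm₂
          = 2 * Real.cos s * Real.cos d - 2 * Real.cos s * Real.cos d' := by linarith
        _ = 2 * Real.cos s * (Real.cos d - Real.cos d') := by ring
        _ = 2 * Real.cos s * (-2 * Real.sin u * Real.sin v) := by rw [h3]
        _ = -4 * Real.cos s * Real.sin u * Real.sin v := by ring
    rw [lhs_eq, rhs_eq]
    have hsinu : |Real.sin (m * u)| ≤ m * |Real.sin u| := by
      have h := abs_sin_nat_mul (2 * k + 1) u; rwa [hmnat] at h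
    have hsinv : |Real.sin (m * v)| ≤ m * |Real.sin v| := by
      have h := abs_sin_nat_mul (2 * k + 1) v; rwa [hmnat] at h
    calc |(-4) * Real.cos (m * s) * Real.sin (m * u) * Real.sin (m * v)|
        = 4 * (|Real.cos (m * s)| * |Real.sin (m * u)| * |Real.sin (m * v)|) := by
          rw [abs_mul, abs_mul, abs_mul]
          norm_num
          ring
      _ ≤ 4 * ((m * |Real.cos s|) * (m * |Real.sin u|) * (m * |Real.sin v|)) := by
          gcongr <;> positivity
      _ = m ^ 3 * |(-4) * Real.cos s * Real.sin u * Real.sin v| := by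
          rw [abs_mul, abs_mul, abs_mul]
          norm_num
          ring
  · -- odd case
    have hsr : s' = s - Real.pi * (2 * q + 1) := by
      rw [hq] at hj; rw [hs, hs']; push_cast at hj ⊢; linarith
    have hceq : ∀ t : ℤ, Odd t → Real.cos ((t : ℝ) * s') = -Real.cos ((t : ℝ) * s) := by
      rintro t ⟨r, hr⟩
      have e : (t : ℝ) * s' = ((t : ℝ) * s - Real.pi) - ((t * q + r : ℤ) : ℝ) * (2 * Real.pi) := by
        rw [hsr, hr]; push_cast; ring
      rw [e, Real.cos_sub_int_mul_two_pi, Real.cos_sub_pi]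
    have hc1 : Real.cos (m * s') = -Real.cos (m * s) := by
      have h := hceq (2 * k + 1) ⟨k, by ring⟩
      rw [show (((2 * k + 1 : ℤ)) : ℝ) = m by rw [hm]; push_cast; ring] at h
      exact h
    have hc0 : Real.cos s' = -Real.cos s := by
      have h := hceq 1 ⟨0, by ring⟩; simpa using h
    have D : ∀ t : ℝ, Real.cos (t * d) + Real.cos (t * d')
        = 2 * Real.cos (t * u) * Real.cos (t * v) := by
      intro t
      have h := Real.cos_add_cos (t * d) (t * d')
      have e1 : (t * d + t * d') / 2 = t * u := by rw [hu]; ring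
      have e2 : (t * d - t * d') / 2 = t * v := by rw [hv]; ring
      rwa [e1, e2] at h
    have lhs_eq : Real.cos (m * w₁) + Real.cos (m * w₂) - Real.cos (m * wm₁) - Real.cos (m * wm₂)
        = 4 * Real.cos (m * s) * Real.cos (m * u) * Real.cos (m * v) := by
      have h1 := E m; have h2 := E' m; have h3 := D m
      rw [hc1] at h2
      calc Real.cos (m * w₁) + Real.cos (m * w₂) - Real.cos (m * wm₁) - Real.cos (m * wm₂)
          = 2 * Real.cos (m * s) * Real.cos (m * d) + 2 * Real.cos (m * s) * Real.cos (m * d') := by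
            linarith
        _ = 2 * Real.cos (m * s) * (Real.cos (m * d) + Real.cos (m * d')) := by ring
        _ = 2 * Real.cos (m * s) * (2 * Real.cos (m * u) * Real.cos (m * v)) := by rw [h3]
        _ = 4 * Real.cos (m * s) * Real.cos (m * u) * Real.cos (m * v) := by ring
    have rhs_eq : Real.cos w₁ + Real.cos w₂ - Real.cos wm₁ - Real.cos wm₂
        = 4 * Real.cos s * Real.cos u * Real.cos v := by
      have h1 := E 1; have h2 := E' 1; have h3 := D 1
      simp only [one_mul] at h1 h2 h3
      rw [hc0] at h2
      calc Real.cos w₁ + Real.cos w₂ - Real.cos wm₁ - Real.cos wm₂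
          = 2 * Real.cos s * Real.cos d + 2 * Real.cos s * Real.cos d' := by linarith
        _ = 2 * Real.cos s * (Real.cos d + Real.cos d') := by ring
        _ = 2 * Real.cos s * (2 * Real.cos u * Real.cos v) := by rw [h3]
        _ = 4 * Real.cos s * Real.cos u * Real.cos v := by ring
    rw [lhs_eq, rhs_eq]
    have hcosu : |Real.cos (m * u)| ≤ m * |Real.cos u| := by
      have h := abs_cos_odd_mul k u; rw [hm]; exact h
    have hcosv : |Real.cos (m * v)| ≤ m * |Real.cos v| := by
      have h := abs_cos_odd_mul k v; rw [hm]; exact h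
    calc |4 * Real.cos (m * s) * Real.cos (m * u) * Real.cos (m * v)|
        = 4 * (|Real.cos (m * s)| * |Real.cos (m * u)| * |Real.cos (m * v)|) := by
          rw [abs_mul, abs_mul, abs_mul]
          norm_num
          ring
      _ ≤ 4 * ((m * |Real.cos s|) * (m * |Real.cos u|) * (m * |Real.cos v|)) := by
          gcongr <;> positivity
      _ = m ^ 3 * |4 * Real.cos s * Real.cos u * Real.cos v| := by
          rw [abs_mul, abs_mul, abs_mul]
          norm_num
          ring
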